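/- Consider a directed acyclic graph with strictly upper triangular adjacency matrix and let R = [[A, I],[0, B]], where A and B are strictly upper triangular adjacency matrices of subgraphs of equal order. If A = B, then p(R) = p(A) + 1, where p(·) denotes the number of vertices along the longest directed path in the graph represented by the given adjacency matrix. -/

import Mathlib

/-- `pLen M` is the number of vertices along the longest directed (simple) path in the
directed graph whose adjacency matrix is `M` (an edge from `a` to `b` iff `M a b ≠ 0`). -/
noncomputable def pLen {V : Type*} [Fintype V] (M : Matrix V V ℕ) : ℕ :=
  sSup {r : ℕ | ∃ l : List V, l.Nodup ∧ l.Chain' (fun a b => M a b ≠ 0) ∧ l.length = r}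

/-- A matrix is strictly upper triangular. -/
def StrictUpper {q : ℕ} (A : Matrix (Fin q) (Fin q) ℕ) : Prop :=
  ∀ a b : Fin q, b ≤ a → A a b = 0

/-- A 0–1 matrix (adjacency matrix). -/
def ZeroOne {q : ℕ} (A : Matrix (Fin q) (Fin q) ℕ) : Prop :=
  ∀ a b : Fin q, A a b ≤ 1

lemma pLen_bdd {V : Type*} [Fintype V] (M : Matrix V V ℕ) :
    BddAbove {r : ℕ | ∃ l : List V, l.Nodup ∧ l.Chain' (fun a b => M a b ≠ 0) ∧ l.length = r} :=
  ⟨Fintype.card V, fun _ ⟨_, hn, _, hl⟩ => hl ▸ hn.length_le_card⟩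

lemma chain_nodup {q : ℕ} {A : Matrix (Fin q) (Fin q) ℕ} (hA : StrictUpper A)
    {l : List (Fin q)} (h : l.Chain' (fun a b => A a b ≠ 0)) : l.Nodup := by
  have h' : l.Chain' (· < ·) :=
    List.IsChain.imp (fun a b hab => lt_of_not_ge fun hle => hab (hA _ _ hle)) h
  exact ((List.isChain_iff_pairwise.mp h').imp ne_of_lt)

lemma sum_chain_split {α β : Type*} (r : α ⊕ β → α ⊕ β → Prop)
    (h : ∀ a b, ¬ r (Sum.inr b) (Sum.inl a)) :
    ∀ l : List (α ⊕ β), l.Chain' r →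
      ∃ (l1 : List α) (l2 : List β), l = l1.map Sum.inl ++ l2.map Sum.inr := by
  intro l hl
  induction l with
  | nil => exact ⟨[], [], rfl⟩
  | cons x l ih =>
    obtain ⟨l1, l2, rfl⟩ := ih hl.tail
    cases x with
    | inl a => exact ⟨a :: l1, l2, rfl⟩
    | inr b =>
      cases l1 with
      | nil => exact ⟨[], b :: l2, rfl⟩
      | cons c l1 =>
        exfalso
        exact h c b (List.isChain_cons_cons.mp hl).1

/-- **Lemma (longest paths, part (ii)).**  For a strictly upper triangular adjacency matrix `A`
(of positive order), the longest path in the graph of `R = [[A, I], [0, B]]` with `A = B` has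
`p(A) + 1` vertices. -/
theorem pLen_fromBlocks_one {q : ℕ} (hq : 0 < q) (A B : Matrix (Fin q) (Fin q) ℕ)
    (hA : StrictUpper A) (hB : StrictUpper B)
    (hA01 : ZeroOne A) (hB01 : ZeroOne B)
    (hAB : A = B) :
    pLen (Matrix.fromBlocks A 1 0 B) = pLen A + 1 := by
  classical
  subst hAB
  set R := Matrix.fromBlocks A 1 0 A with hR
  set SA := {r : ℕ | ∃ l : List (Fin q), l.Nodup ∧ l.Chain' (fun a b => A a b ≠ 0) ∧ l.length = r}
    with hSA
  have hbddA := pLen_bdd A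
  have hbddR := pLen_bdd R
  have hSAne : SA.Nonempty := ⟨0, [], by simp [List.Chain']⟩
  have hone : (1 : ℕ) ∈ SA := ⟨[⟨0, hq⟩], by simp, by simp [List.Chain'], rfl⟩
  have h1le : 1 ≤ pLen A := le_csSup hbddA hone
  apply le_antisymm
  · -- sSup ≤ pLen A + 1
    refine csSup_le ⟨0, [], by simp [List.Chain']⟩ ?_
    rintro r ⟨l, hn, hc, rfl⟩
    obtain ⟨l1, l2, rfl⟩ := sum_chain_split _ (fun a b hr => hr (by simp [hR])) l hc
    rw [List.Chain', List.isChain_append] at hc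
    obtain ⟨hc1, hc2, hcross⟩ := hc
    rw [List.isChain_map] at hc1 hc2
    have hc1' : l1.Chain' (fun a b => A a b ≠ 0) := by
      rw [List.Chain']
      convert hc1 using 3
      simp [hR]
    have hc2' : l2.Chain' (fun a b => A a b ≠ 0) := by
      rw [List.Chain']
      convert hc2 using 3
      simp [hR]
    have memA : ∀ m : List (Fin q), m.Chain' (fun a b => A a b ≠ 0) → m.length ≤ pLen A := by
      intro m hm
      exact le_csSup hbddA ⟨m, chain_nodup hA hm, hm, rfl⟩
    rcases eq_or_ne l1 [] with rfl | hne1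
    · simp only [List.map_nil, List.nil_append, List.length_map]
      rcases eq_or_ne l2 [] with rfl | hne2
      · simp
      · exact le_trans (memA l2 hc2') (Nat.le_succ _)
    rcases eq_or_ne l2 [] with rfl | hne2
    · simpa using le_trans (memA l1 hc1') (Nat.le_succ _)
    -- both nonempty: last of l1 = head of l2
    have hx : l1.getLast hne1 = l2.head hne2 := by
      have h1 : Sum.inl (α := Fin q) (β := Fin q) (l1.getLast hne1) ∈ (l1.map Sum.inl).getLast? := by
        rw [List.getLast?_map, List.getLast?_eq_getLast hne1]; simp
      have h2 : Sum.inr (α := Fin q) (β := Fin q) (l2.head hne2) ∈ (l2.map Sum.inr).head? := by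
        rw [List.head?_map, List.head?_eq_head hne2]; simp
      have := hcross _ h1 _ h2
      simp only [hR, Matrix.fromBlocks_apply₁₂] at this
      by_contra hne
      exact this (Matrix.one_apply_ne hne)
    -- combined list
    set c := l1 ++ l2.tail with hcdef
    have hcchain : c.Chain' (fun a b => A a b ≠ 0) := by
      rw [hcdef, List.Chain', List.isChain_append]
      refine ⟨hc1', List.IsChain.tail hc2', ?_⟩
      intro x hx1 y hy2
      rw [List.getLast?_eq_getLast hne1] at hx1
      simp only [Option.mem_some_iff] at hx1
      subst hx1
      rw [hx]
      have := hc2'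
      rw [List.Chain', ← List.cons_head_tail hne2, List.isChain_cons] at this
      exact this.1 y hy2
    have hlen : (l1.map Sum.inl ++ l2.map Sum.inr).length = c.length + 1 := by
      simp only [List.length_append, List.length_map, hcdef]
      have : l2.length = l2.tail.length + 1 := by
        rw [List.length_tail]
        have := List.length_pos_iff.mpr hne2
        omega
      omega
    rw [hlen]
    exact Nat.succ_le_succ (memA c hcchain)
  · -- pLen A + 1 ≤ sSup
    have hpA : pLen A = sSup SA := rfl
    obtain ⟨l, hn, hc, hl⟩ := Nat.sSup_mem hSAne hbddA
    rw [← hpA] at hl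
    have hlne : l ≠ [] := by
      intro h; rw [h] at hl; simp at hl; omega
    set w : List (Fin q ⊕ Fin q) := l.map Sum.inl ++ [Sum.inr (l.getLast hlne)] with hw
    refine le_csSup hbddR ⟨w, ?_, ?_, ?_⟩
    · rw [hw, List.nodup_append]
      refine ⟨hn.map Sum.inl_injective, List.nodup_singleton _, ?_⟩
      intro x hx
      simp only [List.mem_map] at hx
      obtain ⟨a, _, rfl⟩ := hx
      simp
    · rw [hw, List.Chain', List.isChain_append]
      refine ⟨?_, List.isChain_singleton _, ?_⟩
      · rw [List.isChain_map]
        exact List.IsChain.imp (fun a b hab => by simpa [hR] using hab) hc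
      · intro x hx1 y hy2
        simp only [List.head?_cons, Option.mem_some_iff] at hy2
        subst hy2
        rw [List.getLast?_map, List.getLast?_eq_getLast hlne] at hx1
        simp only [Option.map_some, Option.mem_some_iff] at hx1
        subst hx1
        simp [hR, Matrix.one_apply]
    · simp [hw, hl]
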